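/- If T is a C-symmetric partial isometry on H, then there exists a C-symmetric unitary operator U on H and an orthogonal projection P such that T = UP. -/

import Mathlib

noncomputable section

open ContinuousLinearMap

def IsConjugation {H : Type*} [NormedAddCommGroup H] [InnerProductSpace ℂ H]
    (C : H → H) : Prop :=
  (∀ x y, C (x + y) = C x + C y) ∧
  (∀ (a : ℂ) (x : H), C (a • x) = (starRingEnd ℂ) a • C x) ∧
  (∀ x, C (C x) = x) ∧
  (∀ x y : H, (inner ℂ (C x) (C y) : ℂ) = inner ℂ y x)

def IsPartialIsometry {H : Type*} [NormedAddCommGroup H] [InnerProductSpace ℂ H]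
    [CompleteSpace H] (T : H →L[ℂ] H) : Prop :=
  (adjoint T ∘L T) ∘L (adjoint T ∘L T) = adjoint T ∘L T

theorem exists_conjugation (K : Type*) [NormedAddCommGroup K] [InnerProductSpace ℂ K]
    [CompleteSpace K] : ∃ J : K → K, IsConjugation J := by
  obtain ⟨w, b, -⟩ := exists_hilbertBasis ℂ K
  refine ⟨fun x => b.repr.symm (star (b.repr x)), fun x y => ?_, fun a x => ?_, fun x => ?_,
    fun x y => ?_⟩
  · simp [star_add]
  · simp [star_smul]
  · simp
  · rw [← b.repr.inner_map_map (b.repr.symm (star (b.repr x))), b.repr.apply_symm_apply,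
      ← b.repr.inner_map_map y x]
    rw [lp.inner_eq_tsum, lp.inner_eq_tsum]
    congr 1
    ext i
    simp [RCLike.inner_apply, mul_comm]

theorem CSymmetric_partialIsometry_eq_unitary_mul_projection
    {H : Type*} [NormedAddCommGroup H] [InnerProductSpace ℂ H] [CompleteSpace H]
    (C : H → H) (hC : IsConjugation C)
    (T : H →L[ℂ] H) (hT : IsPartialIsometry T)
    (hTC : ∀ x, T x = C (adjoint T (C x))) :
    ∃ (U P : H →L[ℂ] H),
      (adjoint U ∘L U = 1) ∧ (U ∘L adjoint U = 1) ∧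
      (∀ x, U x = C (adjoint U (C x))) ∧
      (adjoint P = P) ∧ (P ∘L P = P) ∧
      T = U ∘L P := by
  obtain ⟨hCa, hCs, hCi, hCin⟩ := hC
  set A := adjoint T with hA
  -- basic C facts
  have hC0 : C 0 = 0 := by
    have := hCs 0 0; simpa using this
  have hCsub : ∀ x y, C (x - y) = C x - C y := by
    intro x y
    have h1 : C (-y) = - C y := by
      have := hCs (-1) y; simpa [neg_smul] using this
    rw [sub_eq_add_neg, hCa, h1, sub_eq_add_neg]
  have hCflip : ∀ a b, (inner ℂ (C a) b : ℂ) = inner ℂ (C b) a := by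
    intro a b
    conv_lhs => rw [← hCi b]
    rw [hCin]
  have hCnorm : ∀ x, ‖C x‖ = ‖x‖ := by
    intro x
    have h := hCin x x
    rw [inner_self_eq_norm_sq_to_K, inner_self_eq_norm_sq_to_K] at h
    have h2 : (‖C x‖ : ℝ) ^ 2 = ‖x‖ ^ 2 := by exact_mod_cast h
    have n1 := norm_nonneg (C x)
    have n2 := norm_nonneg x
    nlinarith
  -- partial isometry pointwise
  have hT' : ∀ x, A (T (A (T x))) = A (T x) := by
    intro x
    have := ContinuousLinearMap.ext_iff.mp hT x
    simpa using this
  have f1 : ∀ x, T (A (T x)) = T x := by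
    intro x
    have key : (inner ℂ (T (A (T x)) - T x) (T (A (T x)) - T x) : ℂ) = 0 := by
      rw [inner_sub_left, inner_sub_right, inner_sub_right]
      have e1 : (inner ℂ (T (A (T x))) (T (A (T x))) : ℂ) = inner ℂ (A (T x)) (A (T (A (T x)))) := by
        rw [hA, adjoint_inner_right]
      have e2 : (inner ℂ (T (A (T x))) (T x) : ℂ) = inner ℂ (A (T x)) (A (T x)) := by
        rw [hA, adjoint_inner_right]
      have e3 : (inner ℂ (T x) (T (A (T x))) : ℂ) = inner ℂ x (A (T (A (T x)))) := by
        rw [hA, adjoint_inner_right]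
      have e4 : (inner ℂ (T x) (T x) : ℂ) = inner ℂ x (A (T x)) := by
        rw [hA, adjoint_inner_right]
      rw [e1, e2, e3, e4, hT' x]
      ring
    have := inner_self_eq_zero.mp key
    exact sub_eq_zero.mp this
  have f2 : ∀ x, A (T (A x)) = A x := by
    intro x
    have hop : T ∘L (A ∘L T) = T := by
      ext y; simpa using f1 y
    have := congrArg adjoint hop
    rw [adjoint_comp, adjoint_comp, ← hA, adjoint_adjoint] at this
    have := ContinuousLinearMap.ext_iff.mp this x
    simpa using this
  -- C-symmetry pointwise
  have hCT : ∀ x, C (T x) = A (C x) := by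
    intro x
    rw [hTC x, hCi]
  have hAC : ∀ x, A (C x) = C (T x) := fun x => (hCT x).symm
  have hAx : ∀ x, A x = C (T (C x)) := by
    intro x
    have := hCT (C x)
    rw [hCi] at this
    exact this.symm
  have hTCx : ∀ x, T (C x) = C (A x) := by
    intro x
    rw [hAx, hCi]
  -- the kernel
  set K : Submodule ℂ H := LinearMap.ker (T : H →ₗ[ℂ] H) with hK
  haveI : CompleteSpace K := (isClosed_ker T).completeSpace_coe
  obtain ⟨J, hJa, hJs, hJi, hJin⟩ := exists_conjugation K
  have hJflip : ∀ a b : K, (inner ℂ (J a) b : ℂ) = inner ℂ (J b) a := by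
    intro a b
    conv_lhs => rw [← hJi b]
    rw [hJin]
  have hJ0 : J 0 = 0 := by
    have := hJa 0 0; simpa using this
  have hJnorm : ∀ x : K, ‖J x‖ = ‖x‖ := by
    intro x
    have h := hJin x x
    rw [inner_self_eq_norm_sq_to_K, inner_self_eq_norm_sq_to_K] at h
    have h2 : (‖J x‖ : ℝ) ^ 2 = ‖x‖ ^ 2 := by exact_mod_cast h
    have n1 := norm_nonneg (J x)
    have n2 := norm_nonneg x
    nlinarith
  set Q : H →L[ℂ] H := 1 - A ∘L T with hQ
  have hQapp : ∀ x, Q x = x - A (T x) := by intro x; simp [hQ]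
  have hQmem : ∀ x, Q x ∈ K := by
    intro x
    have : T (Q x) = 0 := by
      rw [hQapp]
      rw [map_sub, f1, sub_self]
    exact this
  set q : H → K := fun x => ⟨Q x, hQmem x⟩ with hq
  have hqadd : ∀ x y, q (x + y) = q x + q y := by
    intro x y; apply Subtype.ext; simp [hq]
  have hqsmul : ∀ (a : ℂ) x, q (a • x) = a • q x := by
    intro a x; apply Subtype.ext; simp [hq]
  have hqcoe : ∀ x, ((q x : K) : H) = Q x := fun x => rfl
  have hqk : ∀ k : K, q (k : H) = k := by
    intro k
    apply Subtype.ext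
    rw [hqcoe, hQapp]
    have : T (k : H) = 0 := k.2
    rw [this, map_zero, sub_zero]
  -- A and T kill appropriate kernel vectors
  have hTk : ∀ k : K, T (k : H) = 0 := fun k => k.2
  have hACk : ∀ k : K, A (C (k : H)) = 0 := by
    intro k
    rw [hAC, hTk, hC0]
  -- construct U
  set S : H →ₗ[ℂ] H :=
    { toFun := fun x => C ((J (q x) : K) : H)
      map_add' := by
        intro x y
        show C ((J (q (x + y)) : K) : H) = C ((J (q x) : K) : H) + C ((J (q y) : K) : H)
        rw [hqadd, hJa, Submodule.coe_add, hCa]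
      map_smul' := by
        intro a x
        show C ((J (q (a • x)) : K) : H) = a • C ((J (q x) : K) : H)
        rw [hqsmul, hJs, Submodule.coe_smul, hCs]
        simp } with hS
  have hScont : ∀ x, ‖S x‖ ≤ ‖Q‖ * ‖x‖ := by
    intro x
    have : ‖S x‖ = ‖Q x‖ := by
      rw [hS]
      simp only [LinearMap.coe_mk, AddHom.coe_mk]
      rw [hCnorm]
      calc ‖((J (q x) : K) : H)‖ = ‖J (q x)‖ := rfl
        _ = ‖q x‖ := hJnorm _
        _ = ‖Q x‖ := rfl
    rw [this]
    exact Q.le_opNorm x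
  set Scl : H →L[ℂ] H := S.mkContinuous ‖Q‖ hScont with hScl
  set U : H →L[ℂ] H := T + Scl with hU
  have hUapp : ∀ x, U x = T x + C ((J (q x) : K) : H) := by
    intro x; rfl
  -- construct W = adjoint U
  set W : H →ₗ[ℂ] H :=
    { toFun := fun x => A x + ((J (q (C x)) : K) : H)
      map_add' := by
        intro x y
        show A (x + y) + ((J (q (C (x + y))) : K) : H)
            = (A x + ((J (q (C x)) : K) : H)) + (A y + ((J (q (C y)) : K) : H))
        rw [map_add, hCa, hqadd, hJa, Submodule.coe_add]
        abel
      map_smul' := by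
        intro a x
        show A (a • x) + ((J (q (C (a • x))) : K) : H)
            = a • (A x + ((J (q (C x)) : K) : H))
        rw [map_smul, hCs, hqsmul, hJs, Submodule.coe_smul, smul_add]
        simp } with hWdef
  have hWcont : ∀ x, ‖W x‖ ≤ (‖A‖ + ‖Q‖) * ‖x‖ := by
    intro x
    have h2 : ‖((J (q (C x)) : K) : H)‖ ≤ ‖Q‖ * ‖x‖ := by
      calc ‖((J (q (C x)) : K) : H)‖ = ‖J (q (C x))‖ := rfl
        _ = ‖q (C x)‖ := hJnorm _
        _ = ‖Q (C x)‖ := rfl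
        _ ≤ ‖Q‖ * ‖C x‖ := Q.le_opNorm _
        _ = ‖Q‖ * ‖x‖ := by rw [hCnorm]
    calc ‖W x‖ ≤ ‖A x‖ + ‖((J (q (C x)) : K) : H)‖ := norm_add_le _ _
      _ ≤ ‖A‖ * ‖x‖ + ‖Q‖ * ‖x‖ := add_le_add (A.le_opNorm x) h2
      _ = (‖A‖ + ‖Q‖) * ‖x‖ := by ring
  set Wcl : H →L[ℂ] H := W.mkContinuous _ hWcont with hWcl
  have hWapp : ∀ x, Wcl x = A x + ((J (q (C x)) : K) : H) := by intro x; rfl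
  -- ker vectors are orthogonal to range of A ∘ T
  have hker_orth : ∀ (k : K) (y : H), (inner ℂ (k : H) (A (T y)) : ℂ) = 0 := by
    intro k y
    rw [hA, adjoint_inner_right, hTk, inner_zero_left]
  have hker_inner : ∀ (k : K) (y : H), (inner ℂ (k : H) y : ℂ) = inner ℂ (k : H) (Q y) := by
    intro k y
    rw [hQapp, inner_sub_right, hker_orth, sub_zero]
  have hWadj : adjoint U = Wcl := by
    symm
    rw [eq_adjoint_iff]
    intro x y
    rw [hWapp, hUapp, inner_add_left, inner_add_right]
    congr 1
    · rw [hA, adjoint_inner_left]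
    · -- ⟪↑(J (q (C x))), y⟫ = ⟪x, C ↑(J (q y))⟫
      rw [hker_inner (J (q (C x))) y]
      have h1 : (inner ℂ ((J (q (C x)) : K) : H) (Q y) : ℂ) = inner ℂ (J (q (C x))) (q y) := by
        rw [Submodule.coe_inner]
      rw [h1, hJflip]
      have h2 : (inner ℂ (J (q y)) (q (C x)) : ℂ) = inner ℂ ((J (q y) : K) : H) (Q (C x)) := by
        rw [Submodule.coe_inner]
      rw [h2, ← hker_inner (J (q y)) (C x)]
      conv_lhs => rw [show ((J (q y) : K) : H) = C (C ((J (q y) : K) : H)) from (hCi _).symm]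
      rw [hCin]
  -- key computation facts
  have hqCT : ∀ x, q (C (T x)) = 0 := by
    intro x
    apply Subtype.ext
    rw [hqcoe, hQapp]
    have : A (T (C (T x))) = C (T x) := by
      rw [hTCx (T x)]
      have : A (C (A (T x))) = C (T (A (T x))) := by rw [hAC]
      rw [this, f1]
    rw [this, sub_self]
    rfl
  have hqA : ∀ x, q (A x) = 0 := by
    intro x
    apply Subtype.ext
    rw [hqcoe, hQapp, f2, sub_self]
    rfl
  have hqAT : ∀ x, q (A (T x)) = 0 := fun x => hqA (T x)
  refine ⟨U, A ∘L T, ?_, ?_, ?_, ?_, hT, ?_⟩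
  · -- adjoint U ∘L U = 1
    rw [hWadj]
    ext x
    simp only [coe_comp', Function.comp_apply, one_apply]
    rw [hUapp, hWapp]
    have hACJ : A (C ((J (q x) : K) : H)) = 0 := hACk (J (q x))
    have hAU : A (T x + C ((J (q x) : K) : H)) = A (T x) := by
      rw [map_add, hACJ, add_zero]
    have hCU : C (T x + C ((J (q x) : K) : H)) = C (T x) + ((J (q x) : K) : H) := by
      rw [hCa, hCi]
    rw [hAU, hCU, hqadd, hqCT, hqk, zero_add, hJi]
    rw [hqcoe, hQapp]
    abel
  · -- U ∘L adjoint U = 1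
    rw [hWadj]
    ext x
    simp only [coe_comp', Function.comp_apply, one_apply]
    rw [hWapp, hUapp]
    have hTW : T (A x + ((J (q (C x)) : K) : H)) = T (A x) := by
      rw [map_add, hTk, add_zero]
    have hqW : q (A x + ((J (q (C x)) : K) : H)) = J (q (C x)) := by
      rw [hqadd, hqA, hqk, zero_add]
    rw [hTW, hqW, hJi, hqcoe, hQapp, hCsub, hCi]
    have : C (A (T (C x))) = T (A x) := by
      rw [hTCx x]
      have : A (C (A x)) = C (T (A x)) := hAC (A x)
      rw [this, hCi]
    rw [this]
    abel
  · -- C-symmetry of U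
    intro x
    rw [hWadj, hWapp, hCa, hCi, hUapp]
    congr 1
    exact hTC x
  · -- adjoint (A ∘L T) = A ∘L T
    rw [adjoint_comp, ← hA, adjoint_adjoint]
  · -- T = U ∘L (A ∘L T)
    ext x
    simp only [coe_comp', Function.comp_apply]
    rw [hUapp, hqAT, hJ0]
    have : ((0 : K) : H) = 0 := rfl
    rw [this, hC0, add_zero, f1]
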